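/- Let μ ≥ 0 and let K ⊆ ℝ³ be a regular convex cone that is invariant under the one-parameter group generated by the matrix A = [[μ,1,0],[−1,μ,0],[0,0,0]], i.e., exp(tA)[K] = K for all t ∈ ℝ. Then μ = 0, and K is isomorphic to the second-order cone {x ∈ ℝ³ : x₃ ≥ √(x₁² + x₂²)}. -/

import Mathlib

open Matrix Set

/-- A regular convex cone: closed, convex, invariant under positive scalings,
with nonempty interior, containing no line (pointed). -/
def IsRegularCone {n : ℕ} (K : Set (Fin n → ℝ)) : Prop :=
  IsClosed K ∧ Convex ℝ K ∧ (∀ c : ℝ, 0 < c → ∀ x ∈ K, c • x ∈ K) ∧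
    (interior K).Nonempty ∧ ∀ x ∈ K, -x ∈ K → x = 0

/-- Two cones in ℝ³ are isomorphic if a linear automorphism maps one onto the other. -/
def ConeIso (K K' : Set (Fin 3 → ℝ)) : Prop :=
  ∃ S : Matrix (Fin 3) (Fin 3) ℝ, IsUnit S.det ∧ (fun v => S.mulVec v) '' K = K'

noncomputable section CIRaux

def Pm : Matrix (Fin 3) (Fin 3) ℝ := !![1,0,0;0,1,0;0,0,0]
def Jm : Matrix (Fin 3) (Fin 3) ℝ := !![0,1,0;-1,0,0;0,0,0]
def Qm : Matrix (Fin 3) (Fin 3) ℝ := !![0,0,0;0,0,0;0,0,1]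
def Nm (μ t : ℝ) : Matrix (Fin 3) (Fin 3) ℝ :=
  Qm + (Real.exp (μ*t) * Real.cos t) • Pm + (Real.exp (μ*t) * Real.sin t) • Jm

lemma Am_mul_aux (μ a b : ℝ) :
    (!![μ,1,0;-1,μ,0;0,0,0] : Matrix (Fin 3) (Fin 3) ℝ) * (Qm + a • Pm + b • Jm)
      = (μ*a - b) • Pm + (a + μ*b) • Jm := by
  ext i j
  fin_cases i <;> fin_cases j <;>
    simp [Pm, Jm, Qm, Matrix.mul_apply, Fin.sum_univ_three,
      Matrix.vecHead, Matrix.vecTail] <;> ring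

lemma Nm_zero (μ : ℝ) : Nm μ 0 = 1 := by
  ext i j
  fin_cases i <;> fin_cases j <;>
    simp [Nm, Pm, Jm, Qm, Matrix.one_apply, Matrix.vecHead, Matrix.vecTail]

lemma Nm_neg_mul (μ t : ℝ) : Nm μ (-t) * Nm μ t = 1 := by
  have hE : Real.exp (-(μ*t)) * Real.exp (μ*t) = 1 := by
    rw [← Real.exp_add]; ring_nf; exact Real.exp_zero
  ext i j
  fin_cases i <;> fin_cases j <;>
    simp [Nm, Pm, Jm, Qm, Matrix.mul_apply, Fin.sum_univ_three, Matrix.one_apply,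
      Real.cos_neg, Real.sin_neg, Matrix.vecHead, Matrix.vecTail] <;>
    first
      | linear_combination ((Real.cos t)^2 + (Real.sin t)^2) * hE + Real.sin_sq_add_cos_sq t
      | ring

lemma exp_eq_Nm (μ t : ℝ) :
    NormedSpace.exp (t • (!![μ,1,0;-1,μ,0;0,0,0] : Matrix (Fin 3) (Fin 3) ℝ)) = Nm μ t := by
  letI : SeminormedRing (Matrix (Fin 3) (Fin 3) ℝ) := Matrix.linftyOpSemiNormedRing
  letI : NormedRing (Matrix (Fin 3) (Fin 3) ℝ) := Matrix.linftyOpNormedRing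
  letI : NormedAlgebra ℝ (Matrix (Fin 3) (Fin 3) ℝ) := Matrix.linftyOpNormedAlgebra
  set A : Matrix (Fin 3) (Fin 3) ℝ := !![μ,1,0;-1,μ,0;0,0,0] with hA
  have hN : ∀ s : ℝ, HasDerivAt (fun u => Nm μ u) (A * Nm μ s) s := by
    intro s
    have hf : HasDerivAt (fun u : ℝ => Real.exp (μ*u) * Real.cos u)
        (μ * (Real.exp (μ*s) * Real.cos s) - Real.exp (μ*s) * Real.sin s) s := by
      have h1 : HasDerivAt (fun u : ℝ => Real.exp (μ*u)) (Real.exp (μ*s) * μ) s := by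
        simpa using (((hasDerivAt_id s).const_mul μ).exp)
      have := h1.mul (Real.hasDerivAt_cos s)
      refine this.congr_deriv ?_; ring
    have hg : HasDerivAt (fun u : ℝ => Real.exp (μ*u) * Real.sin u)
        ((Real.exp (μ*s) * Real.cos s) + μ * (Real.exp (μ*s) * Real.sin s)) s := by
      have h1 : HasDerivAt (fun u : ℝ => Real.exp (μ*u)) (Real.exp (μ*s) * μ) s := by
        simpa using (((hasDerivAt_id s).const_mul μ).exp)
      have := h1.mul (Real.hasDerivAt_sin s)
      refine this.congr_deriv ?_; ring
    have h2 : HasDerivAt (fun u => Nm μ u)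
        ((μ * (Real.exp (μ*s) * Real.cos s) - Real.exp (μ*s) * Real.sin s) • Pm
          + ((Real.exp (μ*s) * Real.cos s) + μ * (Real.exp (μ*s) * Real.sin s)) • Jm) s := by
      have := ((hasDerivAt_const s Qm).add (hf.smul_const Pm)).add (hg.smul_const Jm)
      exact this.congr_deriv (by rw [zero_add])
    have h3 := Am_mul_aux μ (Real.exp (μ*s) * Real.cos s) (Real.exp (μ*s) * Real.sin s)
    rw [show Nm μ s = Qm + (Real.exp (μ*s) * Real.cos s) • Pm
      + (Real.exp (μ*s) * Real.sin s) • Jm from rfl, h3]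
    exact h2
  have hg0 : ∀ s : ℝ, HasDerivAt (fun u => NormedSpace.exp (u • A) * Nm μ (-u)) 0 s := by
    intro s
    have h1 := hasDerivAt_exp_smul_const (𝕂 := ℝ) A s
    have h2 : HasDerivAt (fun u : ℝ => Nm μ (-u)) (-(A * Nm μ (-s))) s := by
      have := (hN (-s)).scomp s (hasDerivAt_neg s)
      exact this.congr_deriv (neg_one_smul ℝ _)
    have h3 := h1.mul h2
    have e : NormedSpace.exp (s • A) * A * Nm μ (-s) + NormedSpace.exp (s • A) * -(A * Nm μ (-s)) = 0 := by
      rw [mul_neg, mul_assoc]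
      abel
    exact h3.congr_deriv e
  have hconst : ∀ s : ℝ, (fun u => NormedSpace.exp (u • A) * Nm μ (-u)) s
      = (fun u => NormedSpace.exp (u • A) * Nm μ (-u)) 0 := by
    intro s
    exact is_const_of_fderiv_eq_zero (𝕜 := ℝ)
      (fun x => ((hg0 x).differentiableAt))
      (fun x => ((hg0 x).hasFDerivAt.fderiv).trans (by ext y; simp; rfl)) s 0
  have key : NormedSpace.exp (t • A) * Nm μ (-t) = 1 := by
    have := hconst t
    simp only [zero_smul, NormedSpace.exp_zero, neg_zero, Nm_zero, mul_one] at this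
    exact this
  calc NormedSpace.exp (t • A) = NormedSpace.exp (t • A) * (Nm μ (-t) * Nm μ t) := by
        rw [Nm_neg_mul, mul_one]
    _ = (NormedSpace.exp (t • A) * Nm μ (-t)) * Nm μ t := by rw [mul_assoc]
    _ = Nm μ t := by rw [key, one_mul]

def rotAct (t : ℝ) (x : Fin 3 → ℝ) : Fin 3 → ℝ :=
  ![Real.cos t * x 0 + Real.sin t * x 1, -Real.sin t * x 0 + Real.cos t * x 1, x 2]

lemma Nm_mulVec (μ t : ℝ) (v : Fin 3 → ℝ) :
    (Nm μ t).mulVec v = ![Real.exp (μ*t) * (Real.cos t * v 0 + Real.sin t * v 1),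
      Real.exp (μ*t) * (-Real.sin t * v 0 + Real.cos t * v 1), v 2] := by
  funext i
  fin_cases i <;>
    simp [Nm, Pm, Jm, Qm, Matrix.mulVec, dotProduct, Fin.sum_univ_three,
      Matrix.vecHead, Matrix.vecTail] <;> ring

lemma rotAct_rotAct (a b : ℝ) (x : Fin 3 → ℝ) : rotAct a (rotAct b x) = rotAct (a+b) x := by
  funext i
  fin_cases i <;>
    simp [rotAct, Real.cos_add, Real.sin_add] <;> ring

lemma rotAct_zero (x : Fin 3 → ℝ) : rotAct 0 x = x := by
  funext i; fin_cases i <;> simp [rotAct]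

lemma rotAct_pi (x : Fin 3 → ℝ) : rotAct Real.pi x = ![-x 0, -x 1, x 2] := by
  funext i; fin_cases i <;> simp [rotAct]

lemma Nm_zero_mu_mulVec (t : ℝ) (v : Fin 3 → ℝ) : (Nm 0 t).mulVec v = rotAct t v := by
  rw [Nm_mulVec]
  funext i; fin_cases i <;> simp [rotAct]

/-- existence of a point in the cone with nonzero first coordinate -/
lemma exists_x0_ne (K : Set (Fin 3 → ℝ)) (hK : IsRegularCone K) : ∃ x ∈ K, x 0 ≠ 0 := by
  obtain ⟨-, -, -, ⟨p, hp⟩, -⟩ := hK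
  obtain ⟨ε, hε, hball⟩ := Metric.isOpen_iff.1 isOpen_interior p hp
  have hup : ∀ δ : ℝ, |δ| < ε → (fun i => if i = 0 then p 0 + δ else p i) ∈ K := by
    intro δ hδ
    apply interior_subset
    apply hball
    rw [Metric.mem_ball, dist_pi_lt_iff hε]
    intro i
    by_cases h : i = 0
    · subst h; simpa [Real.dist_eq] using hδ
    · simp [h, hε]
  by_cases h0 : p 0 + ε/2 = 0
  · refine ⟨_, hup (-(ε/2)) (by rw [abs_neg, abs_of_pos (by linarith)]; linarith), ?_⟩
    intro h
    simp at h
    linarith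
  · refine ⟨_, hup (ε/2) (by rw [abs_of_pos (by linarith)]; linarith), ?_⟩
    simpa using h0

lemma mu_eq_zero (μ : ℝ) (hμ : 0 ≤ μ) (K : Set (Fin 3 → ℝ)) (hK : IsRegularCone K)
    (hmem : ∀ t : ℝ, ∀ x ∈ K, (Nm μ t).mulVec x ∈ K) : μ = 0 := by
  rcases hμ.lt_or_eq with hμpos | h
  · exfalso
    obtain ⟨x, hxK, hx0⟩ := exists_x0_ne K hK
    obtain ⟨hcl, hcv, hsc, hint, hpt⟩ := hK
    have twopipos : (0:ℝ) < 2 * Real.pi := by positivity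
    have main : ∀ a : ℝ,
        ![Real.cos a * x 0 + Real.sin a * x 1, -Real.sin a * x 0 + Real.cos a * x 1, 0] ∈ K := by
      intro a
      set y : ℕ → (Fin 3 → ℝ) := fun n =>
        Real.exp (-(μ * (a + n * (2*Real.pi)))) • (Nm μ (a + n * (2*Real.pi))).mulVec x with hy
      have hyK : ∀ n, y n ∈ K := fun n =>
        hsc _ (Real.exp_pos _) _ (hmem _ _ hxK)
      have hyval : ∀ n : ℕ, y n = ![Real.cos a * x 0 + Real.sin a * x 1,
          -Real.sin a * x 0 + Real.cos a * x 1,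
          Real.exp (-(μ * (a + n * (2*Real.pi)))) * x 2] := by
        intro n
        have hE : Real.exp (-(μ * (a + n * (2*Real.pi)))) *
            Real.exp (μ * (a + n * (2*Real.pi))) = 1 := by
          rw [← Real.exp_add]; simp
        rw [hy]
        simp only [Nm_mulVec]
        funext i
        fin_cases i <;>
          simp [Real.cos_add_nat_mul_two_pi, Real.sin_add_nat_mul_two_pi]
        · linear_combination (Real.cos a * x 0 + Real.sin a * x 1) * hE
        · linear_combination (-(Real.sin a) * x 0 + Real.cos a * x 1) * hE
      have hlim : Filter.Tendsto y Filter.atTop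
          (nhds ![Real.cos a * x 0 + Real.sin a * x 1,
            -Real.sin a * x 0 + Real.cos a * x 1, 0]) := by
        have h1 : Filter.Tendsto (fun n : ℕ => μ * (a + (n:ℝ) * (2*Real.pi)))
            Filter.atTop Filter.atTop := by
          have h2 : Filter.Tendsto (fun n : ℕ => (n:ℝ) * (2*Real.pi))
              Filter.atTop Filter.atTop :=
            (tendsto_natCast_atTop_atTop).atTop_mul_const twopipos
          have h3 := (Filter.tendsto_atTop_add_const_left _ a h2).const_mul_atTop hμpos
          exact h3
        have h4 : Filter.Tendsto (fun n : ℕ => Real.exp (-(μ * (a + (n:ℝ) * (2*Real.pi)))) * x 2)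
            Filter.atTop (nhds 0) := by
          have := (Real.tendsto_exp_atBot.comp (Filter.tendsto_neg_atTop_atBot.comp h1)).mul_const (x 2)
          simpa using this
        rw [tendsto_pi_nhds]
        intro i
        have : ∀ n : ℕ, y n i = (![Real.cos a * x 0 + Real.sin a * x 1,
            -Real.sin a * x 0 + Real.cos a * x 1,
            Real.exp (-(μ * (a + n * (2*Real.pi)))) * x 2] : Fin 3 → ℝ) i := by
          intro n; rw [hyval n]
        simp only [this]
        fin_cases i
        · simpa using tendsto_const_nhds
        · simpa using tendsto_const_nhds
        · simpa using h4
      exact hcl.mem_of_tendsto hlim (Filter.Eventually.of_forall hyK)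
    have h0 := main 0
    have hπ := main Real.pi
    simp only [Real.cos_zero, Real.sin_zero, one_mul, zero_mul, neg_zero, add_zero, zero_add,
      Real.cos_pi, Real.sin_pi] at h0 hπ
    have hneg : (![(-1:ℝ) * x 0 + 0 * x 1, -0 * x 0 + -1 * x 1, 0] : Fin 3 → ℝ)
        = -![x 0, x 1, (0:ℝ)] := by
      funext i; fin_cases i <;> simp <;> ring
    have h0' : (![x 0, x 1, (0:ℝ)] : Fin 3 → ℝ) ∈ K := by
      have he : (![x 0 + 0 * x 1, x 1, 0] : Fin 3 → ℝ) = ![x 0, x 1, (0:ℝ)] := by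
        funext i; fin_cases i <;> simp
      simpa [he] using h0
    have hπ' : -(![x 0, x 1, (0:ℝ)] : Fin 3 → ℝ) ∈ K := by
      rw [← hneg]
      simpa using hπ
    have := hpt _ h0' hπ'
    have := congrFun this 0
    simp at this
    exact hx0 this
  · exact h.symm

lemma rotate_canonical (x : Fin 3 → ℝ) :
    ∃ t : ℝ, rotAct t x = ![Real.sqrt ((x 0)^2 + (x 1)^2), 0, x 2] := by
  by_cases hz : x 0 = 0 ∧ x 1 = 0
  · refine ⟨0, ?_⟩
    rw [rotAct_zero]
    funext i; fin_cases i <;> simp [hz.1, hz.2]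
  · set z : ℂ := ⟨x 0, x 1⟩ with hzdef
    have hz0 : z ≠ 0 := by
      intro h
      apply hz
      constructor
      · have := congrArg Complex.re h; simpa [hzdef] using this
      · have := congrArg Complex.im h; simpa [hzdef] using this
    have habs : ‖z‖ = Real.sqrt ((x 0)^2 + (x 1)^2) := by
      rw [Complex.norm_def, Complex.normSq_mk]
      ring_nf
    have habs0 : ‖z‖ ≠ 0 := by
      simpa using hz0
    have hre : z.re = x 0 := rfl
    have him : z.im = x 1 := rfl
    refine ⟨Complex.arg z, ?_⟩
    have hsq : Real.sqrt ((x 0)^2 + (x 1)^2) * Real.sqrt ((x 0)^2 + (x 1)^2)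
        = (x 0)^2 + (x 1)^2 := Real.mul_self_sqrt (by positivity)
    funext i
    fin_cases i
    · show Real.cos z.arg * x 0 + Real.sin z.arg * x 1 = Real.sqrt ((x 0)^2 + (x 1)^2)
      rw [Complex.cos_arg hz0, Complex.sin_arg, hre, him, habs]
      have hs0 : Real.sqrt ((x 0)^2 + (x 1)^2) ≠ 0 := by rw [← habs]; exact habs0
      rw [div_mul_eq_mul_div, div_mul_eq_mul_div, ← add_div, div_eq_iff hs0]
      linear_combination -hsq
    · show -Real.sin z.arg * x 0 + Real.cos z.arg * x 1 = 0
      rw [Complex.cos_arg hz0, Complex.sin_arg, hre, him, habs]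
      ring
    · rfl

lemma pos_case (K : Set (Fin 3 → ℝ)) (hK : IsRegularCone K)
    (hrot : ∀ t : ℝ, ∀ x ∈ K, rotAct t x ∈ K)
    (hpos : ∀ x ∈ K, 0 ≤ x 2) :
    ConeIso K {v | Real.sqrt ((v 0)^2 + (v 1)^2) ≤ v 2} := by
  obtain ⟨hcl, hcv, hsc, ⟨p, hp⟩, hpt⟩ := hK
  -- 0 ∈ K
  have hpK : p ∈ K := interior_subset hp
  have zero_mem : (0 : Fin 3 → ℝ) ∈ K := by
    have hseq : ∀ n : ℕ, (((n:ℝ)+1)⁻¹) • p ∈ K :=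
      fun n => hsc _ (by positivity) _ hpK
    have hlim : Filter.Tendsto (fun n : ℕ => (((n:ℝ)+1)⁻¹) • p) Filter.atTop
        (nhds 0) := by
      rw [tendsto_pi_nhds]
      intro i
      have := tendsto_one_div_add_atTop_nhds_zero_nat.mul_const (p i)
      simpa [one_div, Pi.smul_apply] using this
    exact hcl.mem_of_tendsto hlim (Filter.Eventually.of_forall hseq)
  -- x₂ = 0 forces x = 0
  have planar_zero : ∀ x ∈ K, x 2 = 0 → x = 0 := by
    intro x hx h2
    have h := hrot Real.pi x hx
    rw [rotAct_pi] at h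
    have hneg : (![-x 0, -x 1, x 2] : Fin 3 → ℝ) = -x := by
      funext i; fin_cases i <;> simp [h2]
    exact hpt x hx (hneg ▸ h)
  -- membership is rotation invariant: canonical form
  have canon : ∀ x ∈ K, (![Real.sqrt ((x 0)^2 + (x 1)^2), 0, x 2] : Fin 3 → ℝ) ∈ K := by
    intro x hx
    obtain ⟨t, ht⟩ := rotate_canonical x
    exact ht ▸ hrot t x hx
  have canon' : ∀ x : Fin 3 → ℝ,
      (![Real.sqrt ((x 0)^2 + (x 1)^2), 0, x 2] : Fin 3 → ℝ) ∈ K → x ∈ K := by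
    intro x hx
    obtain ⟨t, ht⟩ := rotate_canonical x
    have h2 := hrot (-t) _ (ht ▸ hx : rotAct t x ∈ K)
    rw [rotAct_rotAct] at h2
    simpa [rotAct_zero] using h2
  -- the slice
  set T : Set ℝ := {s : ℝ | (![s, 0, 1] : Fin 3 → ℝ) ∈ K} with hT
  -- interior point facts
  have hpne : p ≠ 0 := by
    intro h
    subst h
    obtain ⟨ε, hε, hball⟩ := Metric.isOpen_iff.1 isOpen_interior 0 hp
    have hmem : ∀ δ : ℝ, |δ| < ε → (fun i : Fin 3 => if i = 0 then δ else 0) ∈ K := by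
      intro δ hδ
      apply interior_subset
      apply hball
      rw [Metric.mem_ball, dist_pi_lt_iff hε]
      intro i
      by_cases h : i = 0
      · subst h; simpa [Real.dist_eq] using hδ
      · simp [h, hε]
    have h1 := hmem (ε/2) (by rw [abs_of_pos (by linarith)]; linarith)
    have h2 := hmem (-(ε/2)) (by rw [abs_neg, abs_of_pos (by linarith)]; linarith)
    have hneg : (fun i : Fin 3 => if i = 0 then -(ε/2) else (0:ℝ))
        = -(fun i : Fin 3 => if i = 0 then ε/2 else 0) := by
      funext i; by_cases h : i = 0 <;> simp [h]
    have := hpt _ h1 (by rw [← hneg]; exact h2)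
    have := congrFun this 0
    simp at this
    linarith
  have hp2 : 0 < p 2 := by
    rcases (hpos p hpK).lt_or_eq with h | h
    · exact h
    · exact absurd (planar_zero p hpK h.symm) hpne
  -- 0 ∈ T
  have hmid : (![0, 0, p 2] : Fin 3 → ℝ) ∈ K := by
    have hπ := hrot Real.pi p hpK
    rw [rotAct_pi] at hπ
    have := hcv hpK hπ (by norm_num : (0:ℝ) ≤ 1/2) (by norm_num : (0:ℝ) ≤ 1/2) (by norm_num)
    have heq : (1/2 : ℝ) • p + (1/2 : ℝ) • (![-p 0, -p 1, p 2] : Fin 3 → ℝ)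
        = ![0, 0, p 2] := by
      funext i; fin_cases i <;> simp <;> ring
    rwa [heq] at this
  have hT0 : (0:ℝ) ∈ T := by
    have := hsc (p 2)⁻¹ (by positivity) _ hmid
    have heq : (p 2)⁻¹ • (![0, 0, p 2] : Fin 3 → ℝ) = ![0, 0, 1] := by
      funext i; fin_cases i <;> simp [inv_mul_cancel₀ hp2.ne']
    rwa [heq] at this
  -- T bounded above
  have hTbdd : BddAbove T := by
    by_contra hB
    obtain hB' := not_bddAbove_iff.1 hB
    choose s hsT hs using fun n : ℕ => hB' ((n:ℝ)+1)
    have hspos : ∀ n, (0:ℝ) < s n := fun n => lt_trans (by positivity) (hs n)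
    have hmem : ∀ n : ℕ, (![1, 0, (s n)⁻¹] : Fin 3 → ℝ) ∈ K := by
      intro n
      have := hsc (s n)⁻¹ (inv_pos.2 (hspos n)) _ (hsT n)
      have heq : (s n)⁻¹ • (![s n, 0, 1] : Fin 3 → ℝ) = ![1, 0, (s n)⁻¹] := by
        funext i; fin_cases i <;> simp [inv_mul_cancel₀ (hspos n).ne']
      rwa [heq] at this
    have hlim : Filter.Tendsto (fun n : ℕ => (![1, 0, (s n)⁻¹] : Fin 3 → ℝ))
        Filter.atTop (nhds ![1, 0, 0]) := by
      rw [tendsto_pi_nhds]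
      intro i
      fin_cases i
      · simpa using tendsto_const_nhds
      · simpa using tendsto_const_nhds
      · have h1 : Filter.Tendsto (fun n : ℕ => (s n)⁻¹) Filter.atTop (nhds 0) := by
          apply tendsto_of_tendsto_of_tendsto_of_le_of_le (g := fun _ : ℕ => (0:ℝ))
            (h := fun n : ℕ => ((n:ℝ)+1)⁻¹) tendsto_const_nhds
          · simpa [one_div] using tendsto_one_div_add_atTop_nhds_zero_nat (𝕜 := ℝ)
          · intro n; exact inv_nonneg.2 (hspos n).le
          · intro n
            exact inv_anti₀ (by positivity) (hs n).le
        simpa using h1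
    have h10 : (![1, 0, 0] : Fin 3 → ℝ) ∈ K :=
      hcl.mem_of_tendsto hlim (Filter.Eventually.of_forall hmem)
    have := planar_zero _ h10 (by simp)
    have := congrFun this 0
    simp at this
  set ρ : ℝ := sSup T with hρ
  have hTclosed : IsClosed T := by
    have hcont : Continuous (fun s : ℝ => (![s, 0, 1] : Fin 3 → ℝ)) := by
      apply continuous_pi
      intro i
      fin_cases i
      · exact continuous_id
      · simpa using continuous_const
      · simpa using continuous_const
    exact IsClosed.preimage hcont hcl
  have hρT : ρ ∈ T := hTclosed.csSup_mem ⟨0, hT0⟩ hTbdd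
  -- ρ > 0
  have hρpos : 0 < ρ := by
    obtain ⟨x, hxK, hx0⟩ := exists_x0_ne K ⟨hcl, hcv, hsc, ⟨p, hp⟩, hpt⟩
    have hxne : x ≠ 0 := fun h => hx0 (by rw [h]; rfl)
    have hx2 : 0 < x 2 := by
      rcases (hpos x hxK).lt_or_eq with h | h
      · exact h
      · exact absurd (planar_zero x hxK h.symm) hxne
    have hrpos : 0 < Real.sqrt ((x 0)^2 + (x 1)^2) := by
      apply Real.sqrt_pos.2
      have : 0 < (x 0)^2 := lt_of_le_of_ne (sq_nonneg _) (Ne.symm (pow_ne_zero 2 hx0))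
      nlinarith [sq_nonneg (x 1)]
    have hc := canon x hxK
    have := hsc (x 2)⁻¹ (by positivity) _ hc
    have heq : (x 2)⁻¹ • (![Real.sqrt ((x 0)^2 + (x 1)^2), 0, x 2] : Fin 3 → ℝ)
        = ![Real.sqrt ((x 0)^2 + (x 1)^2) / x 2, 0, 1] := by
      funext i; fin_cases i <;>
        simp [inv_mul_cancel₀ hx2.ne', div_eq_inv_mul]
    rw [heq] at this
    have hs0 : Real.sqrt ((x 0)^2 + (x 1)^2) / x 2 ∈ T := this
    calc (0:ℝ) < Real.sqrt ((x 0)^2 + (x 1)^2) / x 2 := div_pos hrpos hx2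
      _ ≤ ρ := le_csSup hTbdd hs0
  -- T is down-closed within [0, ρ]
  have hTdown : ∀ s' : ℝ, 0 ≤ s' → s' ≤ ρ → s' ∈ T := by
    intro s' hs'0 hs'ρ
    rcases eq_or_lt_of_le hs'ρ with h | h
    · rwa [h]
    · have hρ0 : (0:ℝ) < ρ := hρpos
      have hmρ : (![-ρ, 0, 1] : Fin 3 → ℝ) ∈ K := by
        have := hrot Real.pi _ hρT
        rw [rotAct_pi] at this
        have heq : (![-(![ρ, 0, 1] : Fin 3 → ℝ) 0, -(![ρ, 0, 1] : Fin 3 → ℝ) 1,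
            (![ρ, 0, 1] : Fin 3 → ℝ) 2] : Fin 3 → ℝ) = ![-ρ, 0, 1] := by
          funext i; fin_cases i <;> simp
        rwa [heq] at this
      set a : ℝ := (ρ + s') / (2 * ρ) with ha
      have ha0 : 0 ≤ a := by positivity
      have ha1 : a ≤ 1 := by
        rw [ha, div_le_one (by positivity)]
        linarith
      have hcomb := hcv (b := 1 - a) hρT hmρ ha0 (by linarith) (by ring)
      have e0 : a * ρ + (1 - a) * (-ρ) = s' := by rw [ha]; field_simp; ring
      have heq : a • (![ρ, 0, 1] : Fin 3 → ℝ) + (1 - a) • (![-ρ, 0, 1] : Fin 3 → ℝ)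
          = ![s', 0, 1] := by
        funext i
        fin_cases i
        · simpa using e0
        · simp
        · simp
      rwa [heq] at hcomb
  -- characterization of K
  have hchar : ∀ x : Fin 3 → ℝ, x ∈ K ↔ Real.sqrt ((x 0)^2 + (x 1)^2) ≤ ρ * x 2 := by
    intro x
    constructor
    · intro hx
      rcases (hpos x hx).lt_or_eq with h | h
      · have hc := canon x hx
        have := hsc (x 2)⁻¹ (by positivity) _ hc
        have heq : (x 2)⁻¹ • (![Real.sqrt ((x 0)^2 + (x 1)^2), 0, x 2] : Fin 3 → ℝ)
            = ![Real.sqrt ((x 0)^2 + (x 1)^2) / x 2, 0, 1] := by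
          funext i; fin_cases i <;>
            simp [inv_mul_cancel₀ h.ne', div_eq_inv_mul]
        rw [heq] at this
        have hle : Real.sqrt ((x 0)^2 + (x 1)^2) / x 2 ≤ ρ := le_csSup hTbdd this
        calc Real.sqrt ((x 0)^2 + (x 1)^2)
            = (Real.sqrt ((x 0)^2 + (x 1)^2) / x 2) * x 2 := by field_simp
          _ ≤ ρ * x 2 := mul_le_mul_of_nonneg_right hle h.le
      · have hx0 := planar_zero x hx h.symm
        rw [hx0]
        simp
    · intro h
      have hr0 : 0 ≤ Real.sqrt ((x 0)^2 + (x 1)^2) := Real.sqrt_nonneg _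
      have hx2 : 0 ≤ x 2 := by nlinarith
      rcases hx2.lt_or_eq with h2 | h2
      · have hs' : Real.sqrt ((x 0)^2 + (x 1)^2) / x 2 ∈ T := by
          apply hTdown _ (by positivity)
          rw [div_le_iff₀ h2]
          exact h.trans_eq (by ring)
        have := hsc (x 2) h2 _ hs'
        have heq : (x 2) • (![Real.sqrt ((x 0)^2 + (x 1)^2) / x 2, 0, 1] : Fin 3 → ℝ)
            = ![Real.sqrt ((x 0)^2 + (x 1)^2), 0, x 2] := by
          funext i; fin_cases i <;> simp
          · field_simp
        rw [heq] at this
        exact canon' x this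
      · have hrz : Real.sqrt ((x 0)^2 + (x 1)^2) = 0 := by
          apply le_antisymm _ hr0
          calc Real.sqrt ((x 0)^2 + (x 1)^2) ≤ ρ * x 2 := h
            _ = 0 := by rw [← h2, mul_zero]
        have hsum : (x 0)^2 + (x 1)^2 = 0 :=
          (Real.sqrt_eq_zero (by positivity)).1 hrz
        have hx0 : x 0 = 0 := by
          have : (x 0)^2 = 0 := by nlinarith [sq_nonneg (x 0), sq_nonneg (x 1)]
          exact pow_eq_zero_iff (by norm_num) |>.1 this
        have hx1 : x 1 = 0 := by
          have : (x 1)^2 = 0 := by nlinarith [sq_nonneg (x 0), sq_nonneg (x 1)]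
          exact pow_eq_zero_iff (by norm_num) |>.1 this
        have hxeq : x = 0 := by
          funext i; fin_cases i <;> simp [hx0, hx1, ← h2]
        rw [hxeq]
        exact zero_mem
  -- the isomorphism
  have hSmul : ∀ v : Fin 3 → ℝ,
      (!![ρ⁻¹,0,0;0,ρ⁻¹,0;0,0,1] : Matrix (Fin 3) (Fin 3) ℝ).mulVec v
        = ![ρ⁻¹ * v 0, ρ⁻¹ * v 1, v 2] := by
    intro v
    funext i
    fin_cases i <;>
      simp [Matrix.mulVec, dotProduct, Fin.sum_univ_three,
        Matrix.vecHead, Matrix.vecTail]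
  refine ⟨!![ρ⁻¹,0,0;0,ρ⁻¹,0;0,0,1], ?_, ?_⟩
  · have hdet : (!![ρ⁻¹,0,0;0,ρ⁻¹,0;0,0,1] : Matrix (Fin 3) (Fin 3) ℝ).det = ρ⁻¹ * ρ⁻¹ := by
      rw [Matrix.det_fin_three]
      simp [Matrix.vecHead, Matrix.vecTail]
    rw [hdet, isUnit_iff_ne_zero]
    positivity
  · ext w
    simp only [Set.mem_image, Set.mem_setOf_eq]
    constructor
    · rintro ⟨x, hx, rfl⟩
      rw [hSmul]
      have hle := (hchar x).1 hx
      have heq : (ρ⁻¹ * x 0)^2 + (ρ⁻¹ * x 1)^2 = (ρ⁻¹)^2 * ((x 0)^2 + (x 1)^2) := by ring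
      have : Real.sqrt ((ρ⁻¹ * x 0)^2 + (ρ⁻¹ * x 1)^2)
          = ρ⁻¹ * Real.sqrt ((x 0)^2 + (x 1)^2) := by
        rw [heq, Real.sqrt_mul (sq_nonneg _), Real.sqrt_sq (by positivity)]
      have hfinal : Real.sqrt ((ρ⁻¹ * x 0)^2 + (ρ⁻¹ * x 1)^2) ≤ x 2 := by
        rw [this]
        calc ρ⁻¹ * Real.sqrt ((x 0)^2 + (x 1)^2) ≤ ρ⁻¹ * (ρ * x 2) :=
              mul_le_mul_of_nonneg_left hle (by positivity)
          _ = x 2 := by field_simp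
      simpa using hfinal
    · intro hw
      refine ⟨![ρ * w 0, ρ * w 1, w 2], ?_, ?_⟩
      · rw [hchar]
        have h0 : (![ρ * w 0, ρ * w 1, w 2] : Fin 3 → ℝ) 0 = ρ * w 0 := rfl
        have h1 : (![ρ * w 0, ρ * w 1, w 2] : Fin 3 → ℝ) 1 = ρ * w 1 := rfl
        have h2 : (![ρ * w 0, ρ * w 1, w 2] : Fin 3 → ℝ) 2 = w 2 := rfl
        rw [h0, h1, h2]
        have heq : (ρ * w 0)^2 + (ρ * w 1)^2 = ρ^2 * ((w 0)^2 + (w 1)^2) := by ring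
        rw [heq, Real.sqrt_mul (sq_nonneg _), Real.sqrt_sq hρpos.le]
        exact mul_le_mul_of_nonneg_left hw hρpos.le
      · rw [hSmul]
        funext i
        fin_cases i <;> simp <;> field_simp

/-- the flip map -/
def fneg (x : Fin 3 → ℝ) : Fin 3 → ℝ := ![x 0, x 1, -x 2]

lemma fneg_fneg (x : Fin 3 → ℝ) : fneg (fneg x) = x := by
  funext i; fin_cases i <;> simp [fneg]

lemma fneg_neg (x : Fin 3 → ℝ) : fneg (-x) = -fneg x := by
  funext i; fin_cases i <;> simp [fneg]

lemma fneg_smul (c : ℝ) (x : Fin 3 → ℝ) : fneg (c • x) = c • fneg x := by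
  funext i; fin_cases i <;> simp [fneg]

lemma fneg_add (x y : Fin 3 → ℝ) : fneg (x + y) = fneg x + fneg y := by
  funext i; fin_cases i <;> simp [fneg] <;> ring

lemma fneg_cont : Continuous fneg := by
  apply continuous_pi
  intro i
  fin_cases i
  · simpa [fneg] using continuous_apply (0 : Fin 3)
  · simpa [fneg] using continuous_apply (1 : Fin 3)
  · exact (continuous_apply (2 : Fin 3)).neg

lemma fneg_rotAct (t : ℝ) (x : Fin 3 → ℝ) : rotAct t (fneg x) = fneg (rotAct t x) := by
  funext i; fin_cases i <;> simp [fneg, rotAct]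

lemma Fm_mulVec (v : Fin 3 → ℝ) :
    (!![1,0,0;0,1,0;0,0,-1] : Matrix (Fin 3) (Fin 3) ℝ).mulVec v = fneg v := by
  funext i
  fin_cases i <;>
    simp [fneg, Matrix.mulVec, dotProduct, Fin.sum_univ_three,
      Matrix.vecHead, Matrix.vecTail]

lemma fneg_image_eq_preimage (K : Set (Fin 3 → ℝ)) : fneg '' K = fneg ⁻¹' K := by
  ext w
  constructor
  · rintro ⟨x, hx, rfl⟩
    rwa [Set.mem_preimage, fneg_fneg]
  · intro hw
    exact ⟨fneg w, hw, fneg_fneg w⟩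

lemma fneg_regular (K : Set (Fin 3 → ℝ)) (hK : IsRegularCone K) :
    IsRegularCone (fneg '' K) := by
  obtain ⟨hcl, hcv, hsc, ⟨p, hp⟩, hpt⟩ := hK
  refine ⟨?_, ?_, ?_, ?_, ?_⟩
  · rw [fneg_image_eq_preimage]
    exact IsClosed.preimage fneg_cont hcl
  · rintro w₁ ⟨x₁, hx₁, rfl⟩ w₂ ⟨x₂, hx₂, rfl⟩ a b ha hb hab
    refine ⟨a • x₁ + b • x₂, hcv hx₁ hx₂ ha hb hab, ?_⟩
    rw [fneg_add, fneg_smul, fneg_smul]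
  · rintro c hc w ⟨x, hx, rfl⟩
    exact ⟨c • x, hsc c hc x hx, fneg_smul c x⟩
  · refine ⟨fneg p, ?_⟩
    rw [fneg_image_eq_preimage]
    apply interior_maximal (Set.preimage_mono interior_subset)
      (IsOpen.preimage fneg_cont isOpen_interior)
    rw [Set.mem_preimage, fneg_fneg]
    exact hp
  · intro w hw hnw
    rw [fneg_image_eq_preimage, Set.mem_preimage] at hw hnw
    rw [fneg_neg] at hnw
    have := hpt _ hw hnw
    have h0 : fneg (0 : Fin 3 → ℝ) = 0 := by
      funext i; fin_cases i <;> simp [fneg]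
    calc w = fneg (fneg w) := (fneg_fneg w).symm
      _ = fneg 0 := by rw [this]
      _ = 0 := h0

end CIRaux

/-- if a regular convex cone in ℝ³ is invariant under the one-parameter
group generated by [[μ,1,0],[−1,μ,0],[0,0,0]] with μ ≥ 0, then μ = 0 and the cone is
isomorphic to the second-order cone. -/
theorem cone_invariant_rotation_is_soc (μ : ℝ) (hμ : 0 ≤ μ)
    (K : Set (Fin 3 → ℝ)) (hK : IsRegularCone K)
    (hinv : ∀ t : ℝ,
      (fun v => (NormedSpace.exp (t • (!![μ,1,0;-1,μ,0;0,0,0] : Matrix (Fin 3) (Fin 3) ℝ))).mulVec v) '' K = K) :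
    μ = 0 ∧ ConeIso K {v | Real.sqrt ((v 0)^2 + (v 1)^2) ≤ v 2} := by
  have hmem : ∀ t : ℝ, ∀ x ∈ K, (Nm μ t).mulVec x ∈ K := by
    intro t x hx
    have h := hinv t
    rw [show (fun v => (NormedSpace.exp (t • (!![μ,1,0;-1,μ,0;0,0,0] :
        Matrix (Fin 3) (Fin 3) ℝ))).mulVec v) = (fun v => (Nm μ t).mulVec v) by
      funext v; rw [exp_eq_Nm]] at h
    rw [← h]
    exact ⟨x, hx, rfl⟩
  have hμ0 : μ = 0 := mu_eq_zero μ hμ K hK hmem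
  refine ⟨hμ0, ?_⟩
  subst hμ0
  have hrot : ∀ t : ℝ, ∀ x ∈ K, rotAct t x ∈ K := by
    intro t x hx
    have := hmem t x hx
    rwa [Nm_zero_mu_mulVec] at this
  -- dichotomy of signs
  obtain ⟨hcl, hcv, hsc, hint, hpt⟩ := hK
  have planar_zero : ∀ x ∈ K, x 2 = 0 → x = 0 := by
    intro x hx h2
    have h := hrot Real.pi x hx
    rw [rotAct_pi] at h
    have hneg : (![-x 0, -x 1, x 2] : Fin 3 → ℝ) = -x := by
      funext i; fin_cases i <;> simp [h2]
    exact hpt x hx (hneg ▸ h)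
  have hdich : (∀ x ∈ K, 0 ≤ x 2) ∨ (∀ x ∈ K, x 2 ≤ 0) := by
    by_contra hcon
    push_neg at hcon
    obtain ⟨⟨q, hq, hq2⟩, ⟨r, hr, hr2⟩⟩ := hcon
    -- q 2 < 0 < r 2
    set a : ℝ := r 2 / (r 2 - q 2) with ha
    have hden : 0 < r 2 - q 2 := by linarith
    have ha0 : 0 < a := by positivity
    have ha1 : a < 1 := by
      rw [ha, div_lt_one hden]; linarith
    have hz := hcv (b := 1 - a) hq hr ha0.le (by linarith) (by ring)
    have hz2 : (a • q + (1 - a) • r) 2 = 0 := by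
      simp only [Pi.add_apply, Pi.smul_apply, smul_eq_mul]
      rw [ha]; field_simp; ring
    have hz0 := planar_zero _ hz hz2
    -- then q is a negative multiple of r
    have hq_eq : a • q = -((1 - a) • r) := add_eq_zero_iff_eq_neg.mp hz0
    have h1 : q = -((a⁻¹ * (1 - a)) • r) := by
      calc q = a⁻¹ • (a • q) := by rw [smul_smul, inv_mul_cancel₀ ha0.ne', one_smul]
        _ = a⁻¹ • -((1 - a) • r) := by rw [hq_eq]
        _ = -((a⁻¹ * (1 - a)) • r) := by rw [smul_neg, smul_smul]
    have hmq : -q ∈ K := by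
      have h2 : -q = (a⁻¹ * (1 - a)) • r := by rw [h1, neg_neg]
      rw [h2]
      exact hsc _ (mul_pos (inv_pos.2 ha0) (by linarith)) r hr
    have := hpt q hq hmq
    rw [this] at hq2
    simp at hq2
  rcases hdich with hpos | hneg
  · exact pos_case K ⟨hcl, hcv, hsc, hint, hpt⟩ hrot hpos
  · have hK' : IsRegularCone (fneg '' K) := fneg_regular K ⟨hcl, hcv, hsc, hint, hpt⟩
    have hrot' : ∀ t : ℝ, ∀ w ∈ fneg '' K, rotAct t w ∈ fneg '' K := by
      rintro t w ⟨x, hx, rfl⟩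
      rw [fneg_rotAct]
      exact ⟨rotAct t x, hrot t x hx, rfl⟩
    have hpos' : ∀ w ∈ fneg '' K, 0 ≤ w 2 := by
      rintro w ⟨x, hx, rfl⟩
      have : fneg x 2 = -x 2 := rfl
      rw [this]
      linarith [hneg x hx]
    obtain ⟨S, hdetS, hS⟩ := pos_case (fneg '' K) hK' hrot' hpos'
    refine ⟨S * !![1,0,0;0,1,0;0,0,-1], ?_, ?_⟩
    · rw [Matrix.det_mul]
      apply hdetS.mul
      rw [Matrix.det_fin_three]
      simp
    · have hcomp : (fun v => (S * !![1,0,0;0,1,0;0,0,-1]).mulVec v)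
          = (fun v => S.mulVec v) ∘ fneg := by
        funext v
        rw [Function.comp_apply, ← Fm_mulVec, Matrix.mulVec_mulVec]
      rw [hcomp, Set.image_comp]
      exact hS
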